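/- Let n₁, n₂ ∈ ℕ and let S be a real orthogonal matrix indexed by (Fin n₁) ⊔ {e} ⊔ {ê} ⊔ (Fin n₂) with the block structure S = [[S₁, 0, t₁, 0], [t₁′, 0, r₁, 0], [0, r₂, 0, t₂′], [0, t₂, 0, S₂]]. Let z₁ and z₂ be diagonal matrices of sizes n₁ and n₂ whose diagonal entries all have modulus one, let z_e ∈ ℂ with |z_e| = 1, and set U = (z₁ ⊕ z_e ⊕ z_e ⊕ z₂) · S, a unitary matrix. If a₁ ∈ ℂ^{n₁} satisfies (z₁S₁ − I) a₁ = 0, then t₁′ a₁ = 0, and the vector a = (a₁, 0, 0, 0) (with zeros in the e, ê, and Fin n₂ components) satisfies (I − U) a = 0. -/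

import Mathlib

/-- For a real orthogonal matrix `S` with the block structure
`[[S₁, 0, t₁, 0], [t₁', 0, r₁, 0], [0, r₂, 0, t₂'], [0, t₂, 0, S₂]]`, and
`U = (z₁ ⊕ z_e ⊕ z_e ⊕ z₂) * S` with unimodular diagonal factors: if `a₁` satisfies
`(z₁ S₁ - 1) a₁ = 0` then `t₁' a₁ = 0` and the vector `(a₁, 0, 0, 0)` lies in the
kernel of `1 - U`. -/
theorem stmt18 {n₁ n₂ : ℕ}
    (S₁ : Matrix (Fin n₁) (Fin n₁) ℝ) (t₁ : Matrix (Fin n₁) Unit ℝ)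
    (t₁' : Matrix Unit (Fin n₁) ℝ) (r₁ r₂ : ℝ)
    (S₂ : Matrix (Fin n₂) (Fin n₂) ℝ) (t₂ : Matrix (Fin n₂) Unit ℝ)
    (t₂' : Matrix Unit (Fin n₂) ℝ)
    (S : Matrix ((Fin n₁ ⊕ Unit) ⊕ (Unit ⊕ Fin n₂))
      ((Fin n₁ ⊕ Unit) ⊕ (Unit ⊕ Fin n₂)) ℝ)
    (hS : S = Matrix.fromBlocks
      (Matrix.fromBlocks S₁ 0 t₁' 0)
      (Matrix.fromBlocks t₁ 0 (Matrix.of fun _ _ => r₁) 0)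
      (Matrix.fromBlocks 0 (Matrix.of fun _ _ => r₂) 0 t₂)
      (Matrix.fromBlocks 0 t₂' 0 S₂))
    (hSorth : S * S.transpose = 1)
    (z₁ : Fin n₁ → ℂ) (z₂ : Fin n₂ → ℂ) (ze : ℂ)
    (hz₁ : ∀ i, ‖z₁ i‖ = 1) (hz₂ : ∀ i, ‖z₂ i‖ = 1)
    (hze : ‖ze‖ = 1)
    (U : Matrix ((Fin n₁ ⊕ Unit) ⊕ (Unit ⊕ Fin n₂))
      ((Fin n₁ ⊕ Unit) ⊕ (Unit ⊕ Fin n₂)) ℂ)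
    (hU : U = Matrix.diagonal
        (Sum.elim (Sum.elim z₁ fun _ => ze) (Sum.elim (fun _ => ze) z₂))
        * S.map Complex.ofReal)
    (a₁ : Fin n₁ → ℂ)
    (ha₁ : (Matrix.diagonal z₁ * S₁.map Complex.ofReal - 1).mulVec a₁ = 0) :
    (t₁'.map Complex.ofReal).mulVec a₁ = 0 ∧
    (1 - U).mulVec
      (Sum.elim (Sum.elim a₁ fun _ => 0) (Sum.elim (fun _ => 0) fun _ => 0)) = 0 := by
  -- orthogonality block identity
  have hblk : S₁.transpose * S₁ + t₁'.transpose * t₁' = 1 := by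
    rw [mul_eq_one_comm] at hSorth
    rw [hS] at hSorth
    simp only [Matrix.fromBlocks_transpose, Matrix.fromBlocks_multiply,
      Matrix.fromBlocks_add] at hSorth
    have h1 := congrArg (fun M => (M.toBlocks₁₁).toBlocks₁₁) hSorth
    simp only [Matrix.toBlocks_fromBlocks₁₁] at h1
    have h2 : ((1 : Matrix ((Fin n₁ ⊕ Unit) ⊕ (Unit ⊕ Fin n₂))
        ((Fin n₁ ⊕ Unit) ⊕ (Unit ⊕ Fin n₂)) ℝ).toBlocks₁₁).toBlocks₁₁
        = (1 : Matrix (Fin n₁) (Fin n₁) ℝ) := by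
      ext i j
      simp [Matrix.toBlocks₁₁, Matrix.one_apply]
    rw [h2] at h1
    simpa using h1
  set A : Matrix (Fin n₁) (Fin n₁) ℂ := S₁.map Complex.ofReal with hA
  set B : Matrix Unit (Fin n₁) ℂ := t₁'.map Complex.ofReal with hB
  -- eigen-equation
  have hva : ∀ i, z₁ i * (A.mulVec a₁) i = a₁ i := by
    intro i
    have h := congrFun ha₁ i
    simp only [Matrix.sub_mulVec, Matrix.one_mulVec, Pi.sub_apply, Pi.zero_apply,
      sub_eq_zero, ← Matrix.mulVec_mulVec] at h
    simpa [Matrix.mulVec_diagonal] using h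
  have hz₁ne : ∀ i, z₁ i ≠ 0 := by
    intro i h
    have := hz₁ i
    rw [h] at this
    simp at this
  have hvi : ∀ i, (A.mulVec a₁) i = (z₁ i)⁻¹ * a₁ i := by
    intro i
    rw [← hva i, ← mul_assoc, inv_mul_cancel₀ (hz₁ne i), one_mul]
  -- norms equal
  have hnorm1 : dotProduct (star (A.mulVec a₁)) (A.mulVec a₁)
      = dotProduct (star a₁) a₁ := by
    unfold dotProduct
    refine Finset.sum_congr rfl fun i _ => ?_
    have h1 : (starRingEnd ℂ) (z₁ i)⁻¹ * (z₁ i)⁻¹ = 1 := by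
      rw [← Complex.normSq_eq_conj_mul_self]
      simp [Complex.normSq_eq_norm_sq, map_inv₀, hz₁ i]
    simp only [Pi.star_apply, RCLike.star_def, hvi i, map_mul]
    linear_combination ((starRingEnd ℂ) (a₁ i) * a₁ i) * h1
  -- conjugate transposes of real maps
  have hAH : A.conjTranspose = (S₁.transpose).map Complex.ofReal := by
    rw [hA]
    ext i j
    simp [Matrix.conjTranspose_apply, Complex.conj_ofReal]
  have hBH : B.conjTranspose = (t₁'.transpose).map Complex.ofReal := by
    rw [hB]
    ext i j
    simp [Matrix.conjTranspose_apply, Complex.conj_ofReal]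
  have mapmul : ∀ {l m o : Type} [Fintype m] (M : Matrix l m ℝ) (N : Matrix m o ℝ),
      (M.map Complex.ofReal) * (N.map Complex.ofReal) = (M * N).map Complex.ofReal := by
    intro l m o _ M N
    ext i j
    simp [Matrix.mul_apply, Matrix.map_apply]
  have hsum : A.conjTranspose * A + B.conjTranspose * B = 1 := by
    have haddmap : (S₁.transpose * S₁).map Complex.ofReal
        + (t₁'.transpose * t₁').map Complex.ofReal
        = ((S₁.transpose * S₁ + t₁'.transpose * t₁').map Complex.ofReal) := by
      ext i j
      simp [Matrix.map_apply]
    rw [hAH, hBH, hA, hB, mapmul, mapmul, haddmap, hblk]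
    exact Matrix.map_one _ Complex.ofReal_zero Complex.ofReal_one
  have key : ∀ {m : Type} [Fintype m] (M : Matrix m (Fin n₁) ℂ),
      dotProduct (star (M.mulVec a₁)) (M.mulVec a₁)
      = dotProduct (star a₁) ((M.conjTranspose * M).mulVec a₁) := by
    intro m _ M
    rw [Matrix.star_mulVec, Matrix.dotProduct_mulVec, Matrix.vecMul_vecMul,
      ← Matrix.dotProduct_mulVec]
  have hsplit : dotProduct (star (A.mulVec a₁)) (A.mulVec a₁)
      + dotProduct (star (B.mulVec a₁)) (B.mulVec a₁)
      = dotProduct (star a₁) a₁ := by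
    rw [key A, key B, ← dotProduct_add, ← Matrix.add_mulVec, hsum, Matrix.one_mulVec]
  have hBzero : B.mulVec a₁ = 0 := by
    have h0 : dotProduct (star (B.mulVec a₁)) (B.mulVec a₁) = 0 := by
      rw [hnorm1] at hsplit
      exact add_eq_left.mp hsplit
    open ComplexOrder in
    exact dotProduct_star_self_eq_zero.mp h0
  refine ⟨hBzero, ?_⟩
  -- second part
  have hUa : U.mulVec (Sum.elim (Sum.elim a₁ fun _ => 0) (Sum.elim (fun _ => 0) fun _ => 0))
      = (Sum.elim (Sum.elim a₁ fun _ => 0) (Sum.elim (fun _ => 0) fun _ => 0)) := by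
    funext x
    rw [hU, ← Matrix.mulVec_mulVec]
    have hSa : (S.map Complex.ofReal).mulVec
        (Sum.elim (Sum.elim a₁ fun _ => 0) (Sum.elim (fun _ => 0) fun _ => 0))
        = Sum.elim (Sum.elim (A.mulVec a₁) (B.mulVec a₁)) (Sum.elim (fun _ => 0) fun _ => 0) := by
      funext y
      rcases y with (y | y) | (y | y) <;>
        simp [hS, Matrix.mulVec, dotProduct, Fintype.sum_sum_type,
          Matrix.fromBlocks, hA, hB]
    rw [hSa, hBzero]
    rcases x with (x | x) | (x | x)
    · simpa [Matrix.mulVec_diagonal] using hva x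
    · simp [Matrix.mulVec_diagonal]
    · simp [Matrix.mulVec_diagonal]
    · simp [Matrix.mulVec_diagonal]
  rw [Matrix.sub_mulVec, Matrix.one_mulVec, hUa, sub_self]
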